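/- Exit law from I: under the assumptions that π̂_Iᵗ P_{I×I} = π(I) π̂_Iᵗ and Σ_{i∈I} π̂_I(i) P(i,d) = π(d) for all d ∈ E (where π(E) = 1 − π(I) > 0 and π̂_E(d) = π(d)/π(E)), the Markov chain X with kernel P started from π̂_I satisfies, for all d ∈ E and n ≥ 1: P_{π̂_I}(X_{τ_E} = d, τ_E = n) = π̂_E(d) · π(I)^{n−1}(1 − π(I)). In particular P_{π̂_I}(X_{τ_E} = d) = π̂_E(d), and the exit position X_{τ_E} is independent of the exit time τ_E. -/

import Mathlib

open Finset

/-- Exit law from I: started from π̂_I, for every d ∈ E and n ≥ 0 (exit time n+1),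
P(X_{τ_E} = d, τ_E = n+1) = π̂_E(d)·π(I)ⁿ·(1-π(I)); summing over the exit time,
P(X_{τ_E} = d) = π̂_E(d). In particular X_{τ_E} and τ_E are independent. -/
theorem stmt11 {I E : Type*} [Fintype I] [Fintype E] [Nonempty I] [Nonempty E]
    (P : (I ⊕ E) → (I ⊕ E) → ℝ)
    (hPnn : ∀ a b, 0 ≤ P a b) (hProw : ∀ a, ∑ b, P a b = 1)
    (πhI : I → ℝ) (hnn : ∀ i, 0 ≤ πhI i) (hsum : ∑ i, πhI i = 1)
    (πI : ℝ) (hπI0 : 0 < πI) (hπI1 : πI < 1)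
    (heig : ∀ j : I, ∑ i : I, πhI i * P (Sum.inl i) (Sum.inl j) = πI * πhI j)
    (πE : E → ℝ)
    (hexit : ∀ d : E, ∑ i : I, πhI i * P (Sum.inl i) (Sum.inr d) = πE d)
    (hπEsum : ∑ d, πE d = 1 - πI) :
    (∀ (n : ℕ) (d : E),
      ∑ y : Fin (n + 1) → I,
        πhI (y 0) * (∏ k : Fin n, P (Sum.inl (y k.castSucc)) (Sum.inl (y k.succ)))
          * P (Sum.inl (y (Fin.last n))) (Sum.inr d)
      = (πE d / (1 - πI)) * πI ^ n * (1 - πI)) ∧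
    (∀ d : E,
      (∑' n : ℕ,
        ∑ y : Fin (n + 1) → I,
          πhI (y 0) * (∏ k : Fin n, P (Sum.inl (y k.castSucc)) (Sum.inl (y k.succ)))
            * P (Sum.inl (y (Fin.last n))) (Sum.inr d))
      = πE d / (1 - πI)) := by
  have h1 : (1 : ℝ) - πI ≠ 0 := by linarith
  have key : ∀ (n : ℕ) (g : I → ℝ),
      ∑ y : Fin (n + 1) → I,
        πhI (y 0) * (∏ k : Fin n, P (Sum.inl (y k.castSucc)) (Sum.inl (y k.succ)))
          * g (y (Fin.last n)) = πI ^ n * ∑ j, πhI j * g j := by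
    intro n
    induction n with
    | zero =>
      intro g
      rw [← Equiv.sum_comp (Equiv.funUnique (Fin 1) I).symm]
      simp
    | succ n ih =>
      intro g
      rw [← Equiv.sum_comp (Fin.consEquiv (fun _ : Fin (n+2) => I)),
        Fintype.sum_prod_type]
      have step : ∀ (i : I) (z : Fin (n+1) → I),
          πhI ((Fin.consEquiv (fun _ : Fin (n+2) => I)) (i, z) 0)
            * (∏ k : Fin (n+1),
                P (Sum.inl ((Fin.consEquiv (fun _ : Fin (n+2) => I)) (i, z) k.castSucc))
                  (Sum.inl ((Fin.consEquiv (fun _ : Fin (n+2) => I)) (i, z) k.succ)))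
            * g ((Fin.consEquiv (fun _ : Fin (n+2) => I)) (i, z) (Fin.last (n+1)))
          = πhI i * P (Sum.inl i) (Sum.inl (z 0))
              * ((∏ k : Fin n, P (Sum.inl (z k.castSucc)) (Sum.inl (z k.succ)))
                  * g (z (Fin.last n))) := by
        intro i z
        simp [Fin.consEquiv, Fin.prod_univ_succ, ← Fin.succ_castSucc, ← Fin.succ_last]
        ring
      simp only [step]
      rw [Finset.sum_comm]
      have inner : ∀ z : Fin (n+1) → I,
          ∑ i : I, πhI i * P (Sum.inl i) (Sum.inl (z 0))
              * ((∏ k : Fin n, P (Sum.inl (z k.castSucc)) (Sum.inl (z k.succ)))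
                  * g (z (Fin.last n)))
          = πI * (πhI (z 0)
              * (∏ k : Fin n, P (Sum.inl (z k.castSucc)) (Sum.inl (z k.succ)))
              * g (z (Fin.last n))) := by
        intro z
        rw [← Finset.sum_mul, heig]
        ring
      simp_rw [inner]
      rw [← Finset.mul_sum, ih g, pow_succ]
      ring
  constructor
  · intro n d
    rw [key n (fun j => P (Sum.inl j) (Sum.inr d)), hexit d]
    field_simp
  · intro d
    have h2 : ∀ n : ℕ,
        ∑ y : Fin (n + 1) → I,
          πhI (y 0) * (∏ k : Fin n, P (Sum.inl (y k.castSucc)) (Sum.inl (y k.succ)))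
            * P (Sum.inl (y (Fin.last n))) (Sum.inr d)
        = (πE d / (1 - πI)) * (1 - πI) * πI ^ n := by
      intro n
      rw [key n (fun j => P (Sum.inl j) (Sum.inr d)), hexit d]
      field_simp
    simp_rw [h2]
    rw [tsum_mul_left, tsum_geometric_of_lt_one hπI0.le hπI1]
    field_simp
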